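/- Define q₀(k,θ) = sin(θ/2)·sin(kθ/2)/sin²((1-k)θ/4) and q₁(k) = sin(kπ/2)/sin²((1-k)π/4) for 0 < k < 1, 0 < θ < 2π. Then for 0 < θ < π: q₁(k) ≤ q₀(k,θ) ≤ (π·sin(θ/2)/θ)²·q₁(k), and for π < θ < 2π: (π·sin(θ/2)/θ)²·q₁(k) ≤ q₀(k,θ) ≤ q₁(k). -/

import Mathlib

open Real
open Set

noncomputable def q0 (k θ : ℝ) : ℝ :=
  Real.sin (θ / 2) * Real.sin (k * θ / 2) / (Real.sin ((1 - k) * θ / 4))^2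

noncomputable def q1 (k : ℝ) : ℝ :=
  Real.sin (k * Real.pi / 2) / (Real.sin ((1 - k) * Real.pi / 4))^2


lemma keyconc (k v : ℝ) (hk : 0 < k) (hk1 : k < 1) (hv : 0 < v) (hv2 : v < 2*π)
    (hkv : k*v < π) : k * Real.sin v < Real.sin (k*v) := by
  rcases le_or_gt v π with h | h
  · have hc := strictConcaveOn_sin_Icc.2 (show v ∈ Icc 0 π from ⟨hv.le, h⟩)
      (show (0:ℝ) ∈ Icc 0 π from ⟨le_rfl, Real.pi_pos.le⟩) (ne_of_gt hv) hk
      (show (0:ℝ) < 1 - k by linarith) (by ring)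
    simpa using hc
  · have h1 : Real.sin v < 0 := by
      have : 0 < Real.sin (v - π) := Real.sin_pos_of_pos_of_lt_pi (by linarith) (by linarith)
      rw [Real.sin_sub_pi] at this; linarith
    have h2 : 0 < Real.sin (k*v) := Real.sin_pos_of_pos_of_lt_pi (by positivity) hkv
    nlinarith

lemma key (a b x : ℝ) (ha : 0 < a) (hab : a < b) (hx : 0 < x) (hbx : b*x < π) :
    b * Real.cos (b*x) * Real.sin (a*x) < a * Real.cos (a*x) * Real.sin (b*x) := by
  have hax : a*x < π := by nlinarith
  have hab0 : (0:ℝ) < a + b := by linarith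
  have h1 : (b-a) * Real.sin ((a+b)*x) < (a+b) * Real.sin ((b-a)*x) := by
    have hk : (0:ℝ) < (b-a)/(a+b) := div_pos (by linarith) hab0
    have hk1 : (b-a)/(a+b) < 1 := by rw [div_lt_one hab0]; linarith
    have hkv : ((b-a)/(a+b)) * ((a+b)*x) = (b-a)*x := by
      field_simp
    have := keyconc ((b-a)/(a+b)) ((a+b)*x) hk hk1 (by nlinarith) (by nlinarith)
      (by rw [hkv]; nlinarith)
    rw [hkv] at this
    rw [div_mul_eq_mul_div, div_lt_iff₀ hab0] at this
    linarith [this]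
  have e1 : (a+b)*x = a*x + b*x := by ring
  have e2 : (b-a)*x = b*x - a*x := by ring
  rw [e1, e2, Real.sin_add, Real.sin_sub] at h1
  nlinarith [h1]

lemma key0 (u : ℝ) (hu : 0 < u) (hu2 : u < π) : u * Real.cos u < Real.sin u := by
  rcases le_or_gt (Real.cos u) 0 with h | h
  · have : 0 < Real.sin u := Real.sin_pos_of_pos_of_lt_pi hu hu2
    nlinarith
  · have hu3 : u < π/2 := by
      by_contra hc
      push_neg at hc
      have := Real.cos_nonpos_of_pi_div_two_le_of_le hc (by linarith)
      linarith
    have := Real.lt_tan hu hu3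
    rw [Real.tan_eq_sin_div_cos, lt_div_iff₀ h] at this
    linarith

lemma sinsq (A B : ℝ) : Real.sin (B+A) * Real.sin (B-A) = Real.sin B^2 - Real.sin A^2 := by
  rw [Real.sin_add, Real.sin_sub]
  linear_combination (Real.sin B)^2 * (Real.sin_sq_add_cos_sq A)
    - (Real.sin A)^2 * (Real.sin_sq_add_cos_sq B)

lemma R_anti (k : ℝ) (hk1 : 0 < k) (hk2 : k < 1) :
    StrictAntiOn (fun t => Real.sin ((1+k)*t/4)^2 / Real.sin ((1-k)*t/4)^2) (Ioo 0 (2*π)) := by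
  have hπ := Real.pi_pos
  apply strictAntiOn_of_deriv_neg (convex_Ioo _ _)
  · apply ContinuousOn.div (by fun_prop) (by fun_prop)
    intro t ht
    have : 0 < Real.sin ((1-k)*t/4) :=
      Real.sin_pos_of_pos_of_lt_pi (by nlinarith [ht.1]) (by nlinarith [ht.1, ht.2])
    positivity
  · intro x hx
    rw [interior_Ioo] at hx
    obtain ⟨hx1, hx2⟩ := hx
    have hA : HasDerivAt (fun y:ℝ => Real.sin ((1-k)*y/4)) (Real.cos ((1-k)*x/4) * ((1-k)/4)) x :=
      (Real.hasDerivAt_sin _).comp x (by simpa using ((hasDerivAt_id x).const_mul (1-k)).div_const 4)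
    have hB : HasDerivAt (fun y:ℝ => Real.sin ((1+k)*y/4)) (Real.cos ((1+k)*x/4) * ((1+k)/4)) x :=
      (Real.hasDerivAt_sin _).comp x (by simpa using ((hasDerivAt_id x).const_mul (1+k)).div_const 4)
    have hsA : 0 < Real.sin ((1-k)*x/4) :=
      Real.sin_pos_of_pos_of_lt_pi (by nlinarith) (by nlinarith)
    have hsB : 0 < Real.sin ((1+k)*x/4) :=
      Real.sin_pos_of_pos_of_lt_pi (by nlinarith) (by nlinarith)
    have hd := (hB.pow 2).div (hA.pow 2) (pow_ne_zero 2 hsA.ne')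
    have hd' : HasDerivAt (fun t => Real.sin ((1+k)*t/4)^2 / Real.sin ((1-k)*t/4)^2) _ x := hd
    rw [hd'.deriv]
    apply div_neg_of_neg_of_pos _ (pow_pos (pow_pos hsA 2) 2)
    have hkey := key ((1-k)/4) ((1+k)/4) x (by linarith) (by linarith) hx1 (by nlinarith)
    have e1 : (1-k)/4*x = (1-k)*x/4 := by ring
    have e2 : (1+k)/4*x = (1+k)*x/4 := by ring
    rw [e1, e2] at hkey
    have h3 := mul_pos (mul_pos hsA hsB) (sub_pos.mpr hkey)
    simp only [pow_one, Nat.cast_ofNat, Pi.mul_apply, Pi.pow_apply, Pi.div_apply]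
    nlinarith [h3]

lemma F_mono (k : ℝ) (hk1 : 0 < k) (hk2 : k < 1) :
    StrictMonoOn (fun t => t^2 * Real.sin (k*t/2) / (Real.sin (t/2) * Real.sin ((1-k)*t/4)^2))
      (Ioo 0 (2*π)) := by
  have hπ := Real.pi_pos
  apply strictMonoOn_of_deriv_pos (convex_Ioo _ _)
  · apply ContinuousOn.div (by fun_prop) (by fun_prop)
    intro t ht
    have h1 : 0 < Real.sin ((1-k)*t/4) :=
      Real.sin_pos_of_pos_of_lt_pi (by nlinarith [ht.1]) (by nlinarith [ht.1, ht.2])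
    have h2 : 0 < Real.sin (t/2) :=
      Real.sin_pos_of_pos_of_lt_pi (by nlinarith [ht.1]) (by nlinarith [ht.2])
    positivity
  · intro x hx
    rw [interior_Ioo] at hx
    obtain ⟨hx1, hx2⟩ := hx
    have hA : HasDerivAt (fun y:ℝ => Real.sin ((1-k)*y/4)) (Real.cos ((1-k)*x/4) * ((1-k)/4)) x :=
      (Real.hasDerivAt_sin _).comp x (by simpa using ((hasDerivAt_id x).const_mul (1-k)).div_const 4)
    have hs : HasDerivAt (fun y:ℝ => Real.sin (y/2)) (Real.cos (x/2) * (1/2)) x :=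
      (Real.hasDerivAt_sin _).comp x (by simpa using (hasDerivAt_id x).div_const 2)
    have hsk : HasDerivAt (fun y:ℝ => Real.sin (k*y/2)) (Real.cos (k*x/2) * (k/2)) x :=
      (Real.hasDerivAt_sin _).comp x (by simpa using ((hasDerivAt_id x).const_mul k).div_const 2)
    have hsA : 0 < Real.sin ((1-k)*x/4) :=
      Real.sin_pos_of_pos_of_lt_pi (by nlinarith) (by nlinarith)
    have hss : 0 < Real.sin (x/2) :=
      Real.sin_pos_of_pos_of_lt_pi (by nlinarith) (by nlinarith)
    have hssk : 0 < Real.sin (k*x/2) :=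
      Real.sin_pos_of_pos_of_lt_pi (by nlinarith) (by nlinarith)
    have hN := (hasDerivAt_pow 2 x).mul hsk
    have hD := hs.mul (hA.pow 2)
    have hd := hN.div hD (mul_ne_zero hss.ne' (pow_ne_zero 2 hsA.ne'))
    have hd' : HasDerivAt (fun t => t^2 * Real.sin (k*t/2) / (Real.sin (t/2) * Real.sin ((1-k)*t/4)^2)) _ x := hd
    rw [hd'.deriv]
    apply div_pos _ (pow_pos (mul_pos hss (pow_pos hsA 2)) 2)
    have hkey := key (k/2) (1/2) x (by linarith) (by linarith) hx1 (by nlinarith)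
    have e1 : k/2*x = k*x/2 := by ring
    have e2 : (1:ℝ)/2*x = x/2 := by ring
    rw [e1, e2] at hkey
    have hkey0 := key0 ((1-k)*x/4) (by nlinarith) (by nlinarith)
    have h3 := mul_pos (mul_pos (mul_pos hx1 hx1) (mul_pos hsA hsA)) (sub_pos.mpr hkey)
    have h4 := mul_pos (mul_pos (mul_pos hx1 hssk) (mul_pos hss hsA)) (sub_pos.mpr hkey0)
    simp only [pow_one, Nat.cast_ofNat, Pi.mul_apply, Pi.pow_apply, Pi.div_apply]
    nlinarith [h3, h4]

theorem stmt15 (k θ : ℝ) (hk1 : 0 < k) (hk2 : k < 1) (hθ1 : 0 < θ) (hθ2 : θ < 2 * Real.pi) :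
    (θ < Real.pi →
      q1 k ≤ q0 k θ ∧ q0 k θ ≤ (Real.pi * Real.sin (θ / 2) / θ)^2 * q1 k) ∧
    (Real.pi < θ →
      (Real.pi * Real.sin (θ / 2) / θ)^2 * q1 k ≤ q0 k θ ∧ q0 k θ ≤ q1 k) := by
  have hπ := Real.pi_pos
  have hfacts : ∀ t ∈ Ioo (0:ℝ) (2*π), 0 < Real.sin ((1-k)*t/4) ∧ 0 < Real.sin (t/2) := by
    intro t ht
    exact ⟨Real.sin_pos_of_pos_of_lt_pi (by nlinarith [ht.1]) (by nlinarith [ht.1, ht.2]),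
      Real.sin_pos_of_pos_of_lt_pi (by nlinarith [ht.1]) (by nlinarith [ht.2])⟩
  have hθmem : θ ∈ Ioo (0:ℝ) (2*π) := ⟨hθ1, hθ2⟩
  have hπmem : π ∈ Ioo (0:ℝ) (2*π) := ⟨hπ, by linarith⟩
  obtain ⟨hσ, hs⟩ := hfacts θ hθmem
  obtain ⟨hσπ, hsπ⟩ := hfacts π hπmem
  have hq0R : ∀ t ∈ Ioo (0:ℝ) (2*π),
      q0 k t = Real.sin ((1+k)*t/4)^2 / Real.sin ((1-k)*t/4)^2 - 1 := by
    intro t ht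
    obtain ⟨h1, _⟩ := hfacts t ht
    have hid : Real.sin (t/2) * Real.sin (k*t/2)
        = Real.sin ((1+k)*t/4)^2 - Real.sin ((1-k)*t/4)^2 := by
      have h := sinsq ((1-k)*t/4) ((1+k)*t/4)
      rw [show (1+k)*t/4 + (1-k)*t/4 = t/2 by ring,
        show (1+k)*t/4 - (1-k)*t/4 = k*t/2 by ring] at h
      exact h
    rw [q0, show k * t / 2 = k*t/2 by ring, hid]
    rw [sub_div, div_self (pow_ne_zero 2 h1.ne')]
  have hq0F : ∀ t ∈ Ioo (0:ℝ) (2*π),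
      q0 k t = (t^2 * Real.sin (k*t/2) / (Real.sin (t/2) * Real.sin ((1-k)*t/4)^2))
        * (Real.sin (t/2)/t)^2 := by
    intro t ht
    obtain ⟨h1, h2⟩ := hfacts t ht
    have ht0 : t ≠ 0 := ne_of_gt ht.1
    rw [q0]
    field_simp
  have hq1π : q0 k π = q1 k := by
    rw [q0, q1, Real.sin_pi_div_two, one_mul]
  have hRπ : Real.sin ((1+k)*π/4)^2 / Real.sin ((1-k)*π/4)^2 = q1 k + 1 := by
    have h := hq0R π hπmem; rw [hq1π] at h; linarith
  have hFπ : π^2 * Real.sin (k*π/2) / (Real.sin (π/2) * Real.sin ((1-k)*π/4)^2)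
      = π^2 * q1 k := by
    have h := hq0F π hπmem; rw [hq1π] at h
    have hπ0 : (π:ℝ) ≠ 0 := ne_of_gt hπ
    rw [Real.sin_pi_div_two] at h ⊢
    field_simp at h ⊢
    linarith
  have hanti := R_anti k hk1 hk2
  have hmono := F_mono k hk1 hk2
  constructor
  · intro h
    have h1 := hanti hθmem hπmem h
    have h2 := hmono hθmem hπmem h
    dsimp only at h1 h2
    constructor
    · rw [hq0R θ hθmem]; rw [hRπ] at h1; linarith
    · rw [hq0F θ hθmem]
      have h3 : (θ^2 * Real.sin (k*θ/2) / (Real.sin (θ/2) * Real.sin ((1-k)*θ/4)^2))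
            * (Real.sin (θ/2)/θ)^2
          ≤ (π^2 * Real.sin (k*π/2) / (Real.sin (π/2) * Real.sin ((1-k)*π/4)^2))
            * (Real.sin (θ/2)/θ)^2 :=
        mul_le_mul_of_nonneg_right h2.le (by positivity)
      rw [hFπ] at h3
      calc _ ≤ π^2 * q1 k * (Real.sin (θ/2)/θ)^2 := h3
        _ = (π * Real.sin (θ/2) / θ)^2 * q1 k := by ring
  · intro h
    have h1 := hanti hπmem hθmem h
    have h2 := hmono hπmem hθmem h
    dsimp only at h1 h2
    constructor
    · rw [hq0F θ hθmem]
      have h3 : (π^2 * Real.sin (k*π/2) / (Real.sin (π/2) * Real.sin ((1-k)*π/4)^2))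
            * (Real.sin (θ/2)/θ)^2
          ≤ (θ^2 * Real.sin (k*θ/2) / (Real.sin (θ/2) * Real.sin ((1-k)*θ/4)^2))
            * (Real.sin (θ/2)/θ)^2 :=
        mul_le_mul_of_nonneg_right h2.le (by positivity)
      rw [hFπ] at h3
      calc (π * Real.sin (θ/2) / θ)^2 * q1 k
          = π^2 * q1 k * (Real.sin (θ/2)/θ)^2 := by ring
        _ ≤ _ := h3
    · rw [hq0R θ hθmem]; rw [hRπ] at h1; linarith
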